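/- Let 𝒳 ⊂ ℝⁿ be compact and convex, c ∈ ℝⁿ, I a finite index set, and for each i ∈ I let g_i : ℝⁿ → ℝ be convex and lower-semicontinuous. Suppose that for every subset S ⊆ I the minimizer x*(S) of cᵀx over {x ∈ 𝒳 : g_i(x) ≤ 0 for all i ∈ S} exists and is unique. Then the number of support constraints, i.e. the number of indices i ∈ I with x*(I∖{i}) ≠ x*(I), is at most n. (Consequently the maximum support dimension ζmax of the sampled convex program never exceeds the dimension n of the decision variable.) -/

import Mathlib

/-- The linear objective `cᵀx`. -/
def objective {n : ℕ} (c x : Fin n → ℝ) : ℝ := ∑ i, c i * x i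

/-- The objective as a linear map. -/
noncomputable def objLM {n : ℕ} (c : Fin n → ℝ) : (Fin n → ℝ) →ₗ[ℝ] ℝ :=
  ∑ i, (c i) • (LinearMap.proj i)

lemma objLM_apply {n : ℕ} (c x : Fin n → ℝ) : objLM c x = objective c x := by
  simp [objLM, objective, LinearMap.sum_apply]

lemma objLM_ker_ne_top {n : ℕ} {c : Fin n → ℝ} (hc : c ≠ 0) :
    LinearMap.ker (objLM c) ≠ ⊤ := by
  intro h
  have hcker : c ∈ LinearMap.ker (objLM c) := h ▸ Submodule.mem_top
  rw [LinearMap.mem_ker, objLM_apply, objective] at hcker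
  have hz : ∀ i ∈ Finset.univ, c i * c i = 0 :=
    (Finset.sum_eq_zero_iff_of_nonneg (fun i _ => mul_self_nonneg (c i))).1 hcker
  exact hc (funext fun i => by
    simpa using mul_self_eq_zero.1 (hz i (Finset.mem_univ i)))

open Classical in
/-- The number of support constraints of a convex program over a compact convex set
`X ⊂ ℝⁿ` with linear objective `cᵀx` and finitely many convex lower-semicontinuous
constraints `g i x ≤ 0`, each of whose subproblems has a unique minimizer `xstar s`,
is at most `n`: at most `n` indices `i` satisfy `x*(I∖{i}) ≠ x*(I)`. -/
theorem support_constraints_card_le {n : ℕ} {ι : Type*} [Fintype ι] [DecidableEq ι]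
    (X : Set (Fin n → ℝ)) (hXc : IsCompact X) (hXv : Convex ℝ X)
    (c : Fin n → ℝ) (g : ι → (Fin n → ℝ) → ℝ)
    (hgc : ∀ i : ι, ConvexOn ℝ Set.univ (g i))
    (hgl : ∀ i : ι, LowerSemicontinuous (g i))
    (xstar : Finset ι → (Fin n → ℝ))
    -- `xstar s` is the unique minimizer of `cᵀx` over `{x ∈ X : g i x ≤ 0 ∀ i ∈ s}`
    (hopt : ∀ s : Finset ι,
      xstar s ∈ X ∧ (∀ i ∈ s, g i (xstar s) ≤ 0) ∧
      ∀ y ∈ X, (∀ i ∈ s, g i y ≤ 0) →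
        objective c (xstar s) ≤ objective c y ∧
        (objective c y = objective c (xstar s) → y = xstar s)) :
    (Finset.univ.filter
        fun i : ι => xstar (Finset.univ.erase i) ≠ xstar Finset.univ).card ≤ n := by
  set S := Finset.univ.filter
      fun i : ι => xstar (Finset.univ.erase i) ≠ xstar Finset.univ with hS
  set xs := xstar Finset.univ with hxs
  have hxsX : xs ∈ X := (hopt Finset.univ).1
  have hxsg : ∀ i : ι, g i xs ≤ 0 := fun i => (hopt Finset.univ).2.1 i (Finset.mem_univ i)
  -- case c = 0 : no support constraints at all
  by_cases hc : c = 0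
  · have : S = ∅ := by
      rw [Finset.eq_empty_iff_forall_notMem]
      intro i hi
      rw [hS, Finset.mem_filter] at hi
      refine hi.2 ?_
      have h := (hopt (Finset.univ.erase i)).2.2 xs hxsX
        (fun j _ => hxsg j)
      have hobj : ∀ y : Fin n → ℝ, objective c y = 0 := by
        intro y; simp [objective, hc]
      exact (h.2 (by rw [hobj, hobj])).symm
    simp [this]
  -- main case
  by_contra hcard
  push_neg at hcard
  obtain ⟨T, hTS, hTcard⟩ := Finset.exists_subset_card_eq (show n + 1 ≤ S.card from hcard)
  let e : Fin (n + 1) ≃ {x // x ∈ T} := (T.equivFinOfCardEq hTcard).symm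
  set f : Fin (n + 1) → ι := fun k => (e k : ι) with hf
  have hfinj : Function.Injective f := fun a b hab => e.injective (Subtype.ext hab)
  have hfS : ∀ k, f k ∈ S := fun k => hTS (e k).2
  -- the relaxed optima
  set xr : Fin (n + 1) → (Fin n → ℝ) := fun k => xstar (Finset.univ.erase (f k)) with hxr
  have hxrX : ∀ k, xr k ∈ X := fun k => (hopt _).1
  have hxrg : ∀ k, ∀ i : ι, i ≠ f k → g i (xr k) ≤ 0 := by
    intro k i hi
    exact (hopt (Finset.univ.erase (f k))).2.1 i (Finset.mem_erase.2 ⟨hi, Finset.mem_univ i⟩)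
  have hxrne : ∀ k, xr k ≠ xs := by
    intro k
    have := hfS k
    rw [hS, Finset.mem_filter] at this
    exact this.2
  -- strict objective decrease
  have hlt : ∀ k, objective c (xr k) < objective c xs := by
    intro k
    have h := (hopt (Finset.univ.erase (f k))).2.2 xs hxsX (fun j _ => hxsg j)
    rcases lt_or_eq_of_le h.1 with h' | h'
    · exact h'
    · exact absurd (h.2 h'.symm).symm (hxrne k)
  -- the level α
  set α : ℝ := Finset.univ.sup' (Finset.univ_nonempty) (fun k => objective c (xr k)) with hα
  have hαlt : α < objective c xs := by
    rw [hα]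
    exact (Finset.sup'_lt_iff _).2 (fun k _ => hlt k)
  have hαge : ∀ k, objective c (xr k) ≤ α := fun k =>
    Finset.le_sup' (fun k => objective c (xr k)) (Finset.mem_univ k)
  -- the points on the hyperplane {objective = α}
  set s : Fin (n + 1) → ℝ := fun k =>
    (objective c xs - α) / (objective c xs - objective c (xr k)) with hsdef
  have hs0 : ∀ k, 0 < s k := fun k =>
    div_pos (by linarith [hαlt]) (by linarith [hlt k])
  have hs1 : ∀ k, s k ≤ 1 := by
    intro k
    rw [hsdef, div_le_one (by linarith [hlt k])]
    linarith [hαge k]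
  set z : Fin (n + 1) → (Fin n → ℝ) := fun k => (1 - s k) • xs + s k • xr k with hz
  have hzX : ∀ k, z k ∈ X := fun k =>
    hXv hxsX (hxrX k) (by linarith [hs1 k]) (le_of_lt (hs0 k)) (by ring)
  have hobjz : ∀ k, objective c (z k) = α := by
    intro k
    have : objective c (z k) = (1 - s k) * objective c xs + s k * objective c (xr k) := by
      rw [← objLM_apply, ← objLM_apply, ← objLM_apply, hz]
      simp [map_add, map_smul, smul_eq_mul]
    rw [this]
    have hne : objective c xs - objective c (xr k) ≠ 0 := by linarith [hlt k]
    have : s k * (objective c xs - objective c (xr k)) = objective c xs - α := by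
      rw [hsdef]; field_simp
    nlinarith [this]
  have hgz : ∀ k, ∀ i : ι, i ≠ f k → g i (z k) ≤ 0 := by
    intro k i hi
    have h := (hgc i).2 (Set.mem_univ xs) (Set.mem_univ (xr k))
      (by linarith [hs1 k] : (0:ℝ) ≤ 1 - s k) (le_of_lt (hs0 k)) (by ring)
    calc g i (z k) ≤ (1 - s k) * g i xs + s k * g i (xr k) := by
          simpa [hz, smul_eq_mul] using h
      _ ≤ 0 := by
          have h1 := hxsg i
          have h2 := hxrg k i hi
          nlinarith [hs0 k, hs1 k]
  -- affine dependence of the z's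
  have hdep : ¬ AffineIndependent ℝ z := by
    intro haff
    rw [affineIndependent_iff_linearIndependent_vsub ℝ z 0] at haff
    have hker : ∀ j : {x : Fin (n+1) // x ≠ 0}, z (j : Fin (n+1)) -ᵥ z 0 ∈
        LinearMap.ker (objLM c) := by
      intro j
      rw [LinearMap.mem_ker]
      have : (z (j : Fin (n+1)) -ᵥ z 0 : Fin n → ℝ) = z (j : Fin (n+1)) - z 0 := rfl
      rw [this, map_sub, objLM_apply, objLM_apply, hobjz, hobjz, sub_self]
    set w : {x : Fin (n+1) // x ≠ 0} → LinearMap.ker (objLM c) :=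
      fun j => ⟨z (j : Fin (n+1)) -ᵥ z 0, hker j⟩ with hw
    have hwli : LinearIndependent ℝ w := by
      apply LinearIndependent.of_comp (LinearMap.ker (objLM c)).subtype
      exact haff
    have hcard1 : Fintype.card {x : Fin (n+1) // x ≠ 0} = n := by simp
    have h1 : n ≤ Module.finrank ℝ (LinearMap.ker (objLM c)) := by
      have := hwli.fintype_card_le_finrank
      rwa [hcard1] at this
    have h2 : Module.finrank ℝ (LinearMap.ker (objLM c)) < n := by
      have := Submodule.finrank_lt (K := ℝ) (V := Fin n → ℝ)
        (objLM_ker_ne_top hc)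
      rwa [Module.finrank_fin_fun] at this
    omega
  -- Radon partition
  obtain ⟨I, p, hpI, hpIc⟩ := Convex.radon_partition (𝕜 := ℝ) hdep
  -- p is in X
  have hpX : p ∈ X := by
    have : convexHull ℝ (z '' I) ⊆ X :=
      convexHull_min (by rintro _ ⟨k, _, rfl⟩; exact hzX k) hXv
    exact this hpI
  -- objective value of p is α
  have hobjp : objective c p = α := by
    have hle : convexHull ℝ (z '' I) ⊆ {x | objLM c x ≤ α} :=
      convexHull_min (by rintro _ ⟨k, _, rfl⟩; simp [objLM_apply, hobjz])
        (convex_halfSpace_le (objLM c).isLinear α)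
    have hge : convexHull ℝ (z '' I) ⊆ {x | α ≤ objLM c x} :=
      convexHull_min (by rintro _ ⟨k, _, rfl⟩; simp [objLM_apply, hobjz])
        (convex_halfSpace_ge (objLM c).isLinear α)
    have h1 := hle hpI
    have h2 := hge hpI
    rw [← objLM_apply]
    exact le_antisymm h1 h2
  -- p satisfies all constraints
  have hgp : ∀ i : ι, g i p ≤ 0 := by
    have key : ∀ (i : ι) (U : Set (Fin (n+1))), (∀ j ∈ U, f j ≠ i) →
        p ∈ convexHull ℝ (z '' U) → g i p ≤ 0 := by
      intro i U hU hp
      have hsub : convexHull ℝ (z '' U) ⊆ {x ∈ Set.univ | g i x ≤ 0} := by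
        apply convexHull_min
        · rintro _ ⟨k, hk, rfl⟩
          exact ⟨Set.mem_univ _, hgz k i (fun h => hU k hk (h ▸ rfl))⟩
        · exact (hgc i).convex_le 0
      exact (hsub hp).2
    intro i
    by_cases hex : ∃ k, f k = i
    · obtain ⟨k, rfl⟩ := hex
      by_cases hkI : k ∈ I
      · exact key (f k) Iᶜ (fun j hj h => hj (hfinj h ▸ hkI)) hpIc
      · exact key (f k) I (fun j hj h => hkI (hfinj h ▸ hj)) hpI
    · push_neg at hex
      exact key i I (fun j _ => hex j) hpI
  -- contradiction with optimality of xs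
  have h := ((hopt Finset.univ).2.2 p hpX (fun i _ => hgp i)).1
  rw [hobjp] at h
  linarith [hαlt]
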